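/- (Horseshoe marginal density, case a = 1/2, b = 1/2, φ = 1.) For every real β ≠ 0, ∫₀¹ normalPDF(0, 1/ρ − 1)(β) · f(ρ; 1/2, 1/2, 1) dρ = (1/(√2 · π^(3/2))) · e^(β²/2) · Γ(0, β²/2), where Γ(0, z) = ∫_z^∞ t^(−1) e^(−t) dt is the upper incomplete gamma function at shape 0. -/

import Mathlib

open MeasureTheory Real

/-- The three-parameter beta (TPB) density with parameters `a`, `b`, `φ`. -/
noncomputable def tpb (a b φ x : ℝ) : ℝ :=
  (Real.Gamma (a + b) / (Real.Gamma a * Real.Gamma b)) * φ ^ b * x ^ (b - 1) *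
    (1 - x) ^ (a - 1) * (1 + (φ - 1) * x) ^ (-(a + b))

/-- The centered normal density with variance `v`. -/
noncomputable def normalPDF (v θ : ℝ) : ℝ :=
  (2 * Real.pi * v) ^ (-(1 : ℝ) / 2) * Real.exp (-θ ^ 2 / (2 * v))

/-- The upper incomplete gamma function Γ(s, z) = ∫_z^∞ t^(s−1) e^(−t) dt. -/
noncomputable def upperGamma (s z : ℝ) : ℝ := ∫ t in Set.Ioi z, t ^ (s - 1) * Real.exp (-t)

/-- Horseshoe marginal density, case a = 1/2, b = 1/2, φ = 1. -/
theorem horseshoe_marginal_density (β : ℝ) (hβ : β ≠ 0) :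
    ∫ ρ in Set.Ioo (0 : ℝ) 1, normalPDF (1 / ρ - 1) β * tpb (1 / 2) (1 / 2) 1 ρ =
      (1 / (Real.sqrt 2 * Real.pi ^ ((3 : ℝ) / 2))) * Real.exp (β ^ 2 / 2) *
        upperGamma 0 (β ^ 2 / 2) := by
  have hz : 0 < β ^ 2 / 2 := by positivity
  set z : ℝ := β ^ 2 / 2 with hz_def
  set f : ℝ → ℝ := fun ρ => z / (1 - ρ) with hf_def
  set f' : ℝ → ℝ := fun ρ => z / (1 - ρ) ^ 2 with hf'_def
  -- image of (0,1) under f is (z, ∞)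
  have himg : f '' Set.Ioo 0 1 = Set.Ioi z := by
    ext t
    constructor
    · rintro ⟨ρ, ⟨h0, h1⟩, rfl⟩
      have h1ρ : 0 < 1 - ρ := by linarith
      simp only [Set.mem_Ioi, hf_def]
      rw [lt_div_iff₀ h1ρ]
      nlinarith
    · intro ht
      simp only [Set.mem_Ioi] at ht
      have ht0 : 0 < t := lt_trans hz ht
      refine ⟨1 - z / t, ⟨?_, ?_⟩, ?_⟩
      · have : z / t < 1 := (div_lt_one ht0).mpr ht
        linarith
      · have : 0 < z / t := div_pos hz ht0
        linarith
      · simp only [hf_def]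
        field_simp
        rw [sub_sub_cancel, div_self (ne_of_gt hz)]
  have hderiv : ∀ ρ ∈ Set.Ioo (0:ℝ) 1, HasDerivWithinAt f (f' ρ) (Set.Ioo 0 1) ρ := by
    rintro ρ ⟨h0, h1⟩
    have h1ρ : (1 : ℝ) - ρ ≠ 0 := by intro h; linarith [(by linarith : (0:ℝ) < 1 - ρ)]
    have h : HasDerivAt (fun ρ : ℝ => 1 - ρ) (-1) ρ := by
      simpa using (hasDerivAt_id ρ).const_sub 1
    have h2 : HasDerivAt f (f' ρ) ρ := by
      have := (h.inv h1ρ).const_mul z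
      simp only [mul_neg, neg_neg] at this
      refine (this.congr_of_eventuallyEq (Filter.Eventually.of_forall fun y => ?_)).congr_deriv ?_
      · simp [hf_def, div_eq_mul_inv]
      · simp only [hf'_def]
        field_simp
    exact h2.hasDerivWithinAt
  have hinj : Set.InjOn f (Set.Ioo (0:ℝ) 1) := by
    rintro a ⟨ha0, ha1⟩ b ⟨hb0, hb1⟩ hab
    simp only [hf_def] at hab
    have ha : (1:ℝ) - a ≠ 0 := by intro h; linarith
    have hb : (1:ℝ) - b ≠ 0 := by intro h; linarith
    field_simp at hab
    linarith
  have key : upperGamma 0 z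
      = ∫ ρ in Set.Ioo (0:ℝ) 1, |f' ρ| • ((f ρ) ^ ((0:ℝ) - 1) * Real.exp (-(f ρ))) := by
    rw [upperGamma, ← himg,
      MeasureTheory.integral_image_eq_integral_abs_deriv_smul measurableSet_Ioo hderiv hinj]
  have hpt : ∀ ρ ∈ Set.Ioo (0:ℝ) 1,
      normalPDF (1/ρ - 1) β * tpb (1/2) (1/2) 1 ρ
        = (1 / (Real.sqrt 2 * Real.pi ^ ((3:ℝ)/2)) * Real.exp z) *
          (|f' ρ| • ((f ρ) ^ ((0:ℝ) - 1) * Real.exp (-(f ρ)))) := by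
    rintro ρ ⟨h0, h1⟩
    have h1ρ : (0:ℝ) < 1 - ρ := by linarith
    have hv : (0:ℝ) < 1/ρ - 1 := by
      rw [lt_sub_iff_add_lt, zero_add, lt_div_iff₀ h0, one_mul]; exact h1
    have hfpos : 0 < f ρ := div_pos hz h1ρ
    have hf'pos : 0 < f' ρ := div_pos hz (by positivity)
    have hπ := Real.pi_pos
    simp only [normalPDF, tpb, smul_eq_mul]
    rw [abs_of_pos hf'pos]
    rw [show (1:ℝ)/2 + 1/2 = 1 by norm_num, Real.Gamma_one, Real.Gamma_one_half_eq]
    rw [show ((1:ℝ) - 1) * ρ = 0 by ring]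
    rw [show ((1:ℝ)) + 0 = 1 by ring, Real.one_rpow, Real.one_rpow]
    rw [show ((1:ℝ)/2 - 1) = -(1/2) by norm_num]
    rw [show (-(1:ℝ))/2 = -(1/2) by norm_num]
    rw [show ((0:ℝ) - 1) = -1 by norm_num, Real.rpow_neg_one]
    rw [Real.rpow_neg (by positivity : (0:ℝ) ≤ 2*Real.pi*(1/ρ-1)),
        Real.rpow_neg h0.le, Real.rpow_neg h1ρ.le]
    rw [← Real.sqrt_eq_rpow, ← Real.sqrt_eq_rpow, ← Real.sqrt_eq_rpow]
    have hπ32 : Real.pi ^ ((3:ℝ)/2) = Real.pi * Real.sqrt Real.pi := by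
      rw [show (3:ℝ)/2 = 1 + 1/2 by norm_num, Real.rpow_add hπ, Real.rpow_one,
        ← Real.sqrt_eq_rpow]
    rw [hπ32]
    have hexp : Real.exp (-β^2 / (2 * (1/ρ - 1))) = Real.exp z * Real.exp (-(f ρ)) := by
      rw [← Real.exp_add]
      congr 1
      simp only [hf_def, hz_def]
      field_simp
      ring
    rw [hexp]
    have hs1 : Real.sqrt (2 * Real.pi * (1/ρ - 1))
        = Real.sqrt 2 * Real.sqrt Real.pi * (Real.sqrt (1 - ρ) / Real.sqrt ρ) := by
      rw [Real.sqrt_mul (by positivity), Real.sqrt_mul (by norm_num)]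
      congr 1
      rw [show 1/ρ - 1 = (1 - ρ)/ρ by field_simp, Real.sqrt_div h1ρ.le]
    rw [hs1]
    have s2 : (0:ℝ) < Real.sqrt 2 := Real.sqrt_pos.mpr (by norm_num)
    have sπ : (0:ℝ) < Real.sqrt Real.pi := Real.sqrt_pos.mpr hπ
    have sρ : (0:ℝ) < Real.sqrt ρ := Real.sqrt_pos.mpr h0
    have s1ρ : (0:ℝ) < Real.sqrt (1-ρ) := Real.sqrt_pos.mpr h1ρ
    have m1 : Real.sqrt Real.pi * Real.sqrt Real.pi = Real.pi := Real.mul_self_sqrt hπ.le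
    have m2 : Real.sqrt ρ * Real.sqrt ρ = ρ := Real.mul_self_sqrt h0.le
    have m3 : Real.sqrt (1-ρ) * Real.sqrt (1-ρ) = 1-ρ := Real.mul_self_sqrt h1ρ.le
    simp only [hf_def, hf'_def]
    field_simp
    ring_nf
    rw [Real.sq_sqrt h1ρ.le]
    ring
    rw [Real.sq_sqrt hπ.le]
  rw [MeasureTheory.setIntegral_congr_fun measurableSet_Ioo hpt,
    MeasureTheory.integral_const_mul, ← key]
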